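/- Let X be standard normal with density φ. For f(u) = φ(u) - u·P(X>u), there is a constant C such that for all u ≥ 1 and v ≥ 0, |f(u) - f(u+v) - (φ(u)/u²)(1 - e^{-v²/2 - uv}/(1 + v/u)²)| ≤ C·min(v/u³, 1/u⁴)·φ(u). -/

import Mathlib

open MeasureTheory Filter
open scoped Topology

/-- Standard normal density. -/
noncomputable def gaussPDF (u : ℝ) : ℝ := (Real.sqrt (2 * Real.pi))⁻¹ * Real.exp (-u ^ 2 / 2)

/-- Standard normal upper tail `P(X > u)`. -/
noncomputable def gaussTail (u : ℝ) : ℝ := ∫ s in Set.Ioi u, gaussPDF s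

/-- `f(u) = φ(u) - u P(X>u)`. -/
noncomputable def gaussF (u : ℝ) : ℝ := gaussPDF u - u * gaussTail u


open Set

lemma gaussPDF_pos (u : ℝ) : 0 < gaussPDF u := by
  have : 0 < Real.sqrt (2 * Real.pi) := Real.sqrt_pos.2 (by positivity)
  exact mul_pos (inv_pos.2 this) (Real.exp_pos _)

lemma gaussPDF_cont : Continuous gaussPDF := by
  unfold gaussPDF; fun_prop

lemma gaussPDF_integrable : Integrable gaussPDF := by
  have h : Integrable (fun x : ℝ => Real.exp (-(1/2 : ℝ) * x ^ 2)) := integrable_exp_neg_mul_sq (by norm_num)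
  have := h.const_mul (Real.sqrt (2 * Real.pi))⁻¹
  refine this.congr ?_
  filter_upwards with x
  unfold gaussPDF
  ring_nf

lemma hasDerivAt_gaussPDF (u : ℝ) : HasDerivAt gaussPDF (-u * gaussPDF u) u := by
  unfold gaussPDF
  have h1 : HasDerivAt (fun x : ℝ => -x ^ 2 / 2) (-u) u := by
    have := ((hasDerivAt_pow 2 u).neg).div_const 2
    exact this.congr_deriv (by norm_num; ring)
  have h2 := (h1.exp).const_mul (Real.sqrt (2 * Real.pi))⁻¹
  exact h2.congr_deriv (by ring)

lemma gaussPDF_tendsto : Tendsto gaussPDF atTop (𝓝 0) := by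
  have h1 : Tendsto (fun u : ℝ => -u ^ 2 / 2) atTop atBot := by
    apply Tendsto.atBot_div_const (by norm_num)
    exact tendsto_neg_atBot_iff.mpr (tendsto_pow_atTop two_ne_zero)
  have := Real.tendsto_exp_atBot.comp h1
  have h2 := this.const_mul (Real.sqrt (2 * Real.pi))⁻¹
  unfold gaussPDF
  simpa [Function.comp] using h2

lemma hasDerivAt_negPdfDiv (s : ℝ) (hs : s ≠ 0) :
    HasDerivAt (fun x => -(gaussPDF x / x)) (gaussPDF s + gaussPDF s / s ^ 2) s := by
  have h := ((hasDerivAt_gaussPDF s).div (hasDerivAt_id s) hs).neg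
  refine h.congr_deriv ?_
  simp only [id]
  field_simp
  ring

lemma tendsto_pdfDiv : Tendsto (fun x => -(gaussPDF x / x)) atTop (𝓝 0) := by
  have h : Tendsto (fun x : ℝ => gaussPDF x * x⁻¹) atTop (𝓝 (0 * 0)) :=
    gaussPDF_tendsto.mul tendsto_inv_atTop_zero
  have := h.neg
  simp only [mul_zero, neg_zero] at this
  refine this.congr ?_
  intro x; rw [div_eq_mul_inv]

lemma pdfDiv_deriv_nonneg {t : ℝ} (ht : 0 < t) : ∀ s ∈ Ioi t, 0 ≤ gaussPDF s + gaussPDF s / s ^ 2 := by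
  intro s hs
  have h0 : 0 < s := ht.trans hs
  have h1 := (gaussPDF_pos s).le
  exact add_nonneg h1 (div_nonneg h1 (sq_nonneg s))

lemma key_integral {t : ℝ} (ht : 0 < t) :
    ∫ s in Ioi t, (gaussPDF s + gaussPDF s / s ^ 2) = gaussPDF t / t := by
  have h := integral_Ioi_of_hasDerivAt_of_nonneg' (a := t)
    (g := fun x => -(gaussPDF x / x)) (g' := fun s => gaussPDF s + gaussPDF s / s ^ 2)
    (fun x hx => hasDerivAt_negPdfDiv x (by have : 0 < x := lt_of_lt_of_le ht hx; linarith))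
    (pdfDiv_deriv_nonneg ht) tendsto_pdfDiv
  rw [h]; ring

lemma key_integrable {t : ℝ} (ht : 0 < t) :
    IntegrableOn (fun s => gaussPDF s / s ^ 2) (Ioi t) := by
  have h := integrableOn_Ioi_deriv_of_nonneg' (a := t)
    (g := fun x => -(gaussPDF x / x)) (g' := fun s => gaussPDF s + gaussPDF s / s ^ 2)
    (fun x hx => hasDerivAt_negPdfDiv x (by have : 0 < x := lt_of_lt_of_le ht hx; linarith))
    (pdfDiv_deriv_nonneg ht) tendsto_pdfDiv
  have h2 := h.sub (gaussPDF_integrable.integrableOn (s := Ioi t))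
  refine h2.congr ?_
  filter_upwards with s
  simp

lemma tail_identity {t : ℝ} (ht : 0 < t) :
    gaussPDF t / t = gaussTail t + ∫ s in Ioi t, gaussPDF s / s ^ 2 := by
  rw [← key_integral ht, gaussTail]
  rw [integral_add (gaussPDF_integrable.integrableOn) (key_integrable ht)]

lemma tail_nonneg (t : ℝ) : 0 ≤ gaussTail t :=
  setIntegral_nonneg measurableSet_Ioi (fun s _ => (gaussPDF_pos s).le)

lemma mills_upper {t : ℝ} (ht : 0 < t) : gaussTail t ≤ gaussPDF t / t := by
  rw [tail_identity ht]
  have : 0 ≤ ∫ s in Ioi t, gaussPDF s / s ^ 2 :=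
    setIntegral_nonneg measurableSet_Ioi (fun s hs => by
      exact div_nonneg (gaussPDF_pos s).le (sq_nonneg s))
  linarith

lemma mills_lower {t : ℝ} (ht : 0 < t) :
    gaussPDF t / t - gaussPDF t / t ^ 3 ≤ gaussTail t := by
  have h1 : (∫ s in Ioi t, gaussPDF s / s ^ 2) ≤ ∫ s in Ioi t, gaussPDF s / t ^ 2 := by
    refine setIntegral_mono_on (key_integrable ht)
      ((gaussPDF_integrable.div_const _).integrableOn) measurableSet_Ioi ?_
    intro s hs
    have hst : t < s := hs
    have hs0 : 0 < s := ht.trans hst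
    have := (gaussPDF_pos s).le
    gcongr
  have h2 : (∫ s in Ioi t, gaussPDF s / t ^ 2) = gaussTail t / t ^ 2 := by
    rw [gaussTail, ← integral_div]
  have h3 : gaussTail t / t ^ 2 ≤ (gaussPDF t / t) / t ^ 2 := by
    exact div_le_div_of_nonneg_right (mills_upper ht) (sq_nonneg t)
  have h4 := tail_identity ht
  have h5 : (gaussPDF t / t) / t ^ 2 = gaussPDF t / t ^ 3 := by
    rw [div_div]; congr 1; ring
  linarith

lemma tail_diff {a b : ℝ} (hab : a ≤ b) :
    gaussTail a - gaussTail b = ∫ s in a..b, gaussPDF s := by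
  have hsplit : Ioc a b ∪ Ioi b = Ioi a := Ioc_union_Ioi_eq_Ioi hab
  have hdisj : Disjoint (Ioc a b) (Ioi b) := by
    apply Ioc_disjoint_Ioi le_rfl
  have := setIntegral_union hdisj measurableSet_Ioi
    (gaussPDF_integrable.integrableOn (s := Ioc a b))
    (gaussPDF_integrable.integrableOn (s := Ioi b))
  rw [hsplit] at this
  rw [intervalIntegral.integral_of_le hab]
  unfold gaussTail
  rw [this]
  ring

lemma tail_eq (u : ℝ) : gaussTail u = gaussTail 0 - ∫ s in (0:ℝ)..u, gaussPDF s := by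
  rcases le_total 0 u with h | h
  · have := tail_diff h; linarith
  · have := tail_diff h
    rw [intervalIntegral.integral_symm]
    linarith

lemma hasDerivAt_gaussTail (u : ℝ) : HasDerivAt gaussTail (-(gaussPDF u)) u := by
  have h1 : HasDerivAt (fun x => ∫ s in (0:ℝ)..x, gaussPDF s) (gaussPDF u) u := by
    exact intervalIntegral.integral_hasDerivAt_right
      (gaussPDF_cont.intervalIntegrable 0 u)
      (gaussPDF_cont.stronglyMeasurableAtFilter _ _)
      gaussPDF_cont.continuousAt
  have h2 := (hasDerivAt_const u (gaussTail 0)).sub h1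
  have heq : gaussTail = fun x => gaussTail 0 - ∫ s in (0:ℝ)..x, gaussPDF s :=
    funext tail_eq
  rw [heq]
  exact h2.congr_deriv (zero_sub _)

lemma gaussTail_cont : Continuous gaussTail := by
  have : Differentiable ℝ gaussTail := fun u => (hasDerivAt_gaussTail u).differentiableAt
  exact this.continuous

lemma hasDerivAt_gaussF (u : ℝ) : HasDerivAt gaussF (-(gaussTail u)) u := by
  have h1 := (hasDerivAt_id u).mul (hasDerivAt_gaussTail u)
  have h2 := (hasDerivAt_gaussPDF u).sub h1
  unfold gaussF
  refine h2.congr_deriv ?_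
  simp only [id_eq, one_mul]
  ring

lemma F_diff (u v : ℝ) :
    gaussF u - gaussF (u + v) = ∫ t in u..(u+v), gaussTail t := by
  have h := intervalIntegral.integral_eq_sub_of_hasDerivAt
    (f := gaussF) (f' := fun t => -(gaussTail t))
    (fun t _ => hasDerivAt_gaussF t)
    ((gaussTail_cont.neg).intervalIntegrable u (u+v))
  rw [intervalIntegral.integral_neg] at h
  linarith [h]

lemma hasDerivAt_h (t : ℝ) (ht : t ≠ 0) :
    HasDerivAt (fun x => -(gaussPDF x / x ^ 2))
      (gaussPDF t / t + 2 * gaussPDF t / t ^ 3) t := by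
  have hpow : HasDerivAt (fun x : ℝ => x ^ 2) (2 * t) t := by
    simpa using hasDerivAt_pow 2 t
  have h := ((hasDerivAt_gaussPDF t).div hpow (pow_ne_zero 2 ht)).neg
  refine h.congr_deriv ?_
  field_simp
  ring

lemma main_term_eq {u v : ℝ} (hu : 1 ≤ u) (hv : 0 ≤ v) :
    gaussPDF u / u ^ 2 * (1 - Real.exp (-v ^ 2 / 2 - u * v) / (1 + v / u) ^ 2)
      = ∫ t in u..(u+v), (gaussPDF t / t + 2 * gaussPDF t / t ^ 3) := by
  have hu0 : (0:ℝ) < u := lt_of_lt_of_le one_pos hu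
  have huv0 : (0:ℝ) < u + v := by linarith
  have hF : ∫ t in u..(u+v), (gaussPDF t / t + 2 * gaussPDF t / t ^ 3)
      = -(gaussPDF (u+v) / (u+v) ^ 2) - (-(gaussPDF u / u ^ 2)) := by
    refine intervalIntegral.integral_eq_sub_of_hasDerivAt
      (f := fun x => -(gaussPDF x / x ^ 2))
      (f' := fun t => gaussPDF t / t + 2 * gaussPDF t / t ^ 3) ?_ ?_
    · intro t htm
      rw [uIcc_of_le (by linarith : u ≤ u + v)] at htm
      exact hasDerivAt_h t (by nlinarith [htm.1])
    · apply ContinuousOn.intervalIntegrable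
      apply ContinuousOn.add
      · exact (gaussPDF_cont.continuousOn).div continuousOn_id
          (fun t htm => by
            rw [uIcc_of_le (by linarith : u ≤ u + v)] at htm
            nlinarith [htm.1])
      · exact (continuousOn_const.mul gaussPDF_cont.continuousOn).div
          (continuousOn_pow 3)
          (fun t htm => by
            rw [uIcc_of_le (by linarith : u ≤ u + v)] at htm
            have : 0 < t := by linarith [htm.1]
            positivity)
  rw [hF]
  have hexp : gaussPDF (u + v) = gaussPDF u * Real.exp (-v ^ 2 / 2 - u * v) := by
    unfold gaussPDF
    rw [mul_assoc, ← Real.exp_add]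
    congr 2
    ring
  rw [hexp]
  have h1 : (1 + v / u) = (u + v) / u := by field_simp
  rw [h1]
  field_simp
  ring

lemma gaussPDF_anti {a t : ℝ} (ha : 0 ≤ a) (hat : a ≤ t) : gaussPDF t ≤ gaussPDF a := by
  unfold gaussPDF
  have : Real.exp (-t ^ 2 / 2) ≤ Real.exp (-a ^ 2 / 2) := by
    apply Real.exp_le_exp.2; nlinarith
  have h0 : (0:ℝ) ≤ (Real.sqrt (2 * Real.pi))⁻¹ := by positivity
  exact mul_le_mul_of_nonneg_left this h0

/-- There is a constant `C` such that for all `u ≥ 1`, `v ≥ 0`,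
`|f(u) - f(u+v) - (φ(u)/u²)(1 - e^{-v²/2-uv}/(1+v/u)²)| ≤ C min(v/u³, 1/u⁴) φ(u)`. -/
theorem stmt1 :
    ∃ C : ℝ, ∀ u v : ℝ, 1 ≤ u → 0 ≤ v →
      |gaussF u - gaussF (u + v)
          - gaussPDF u / u ^ 2 * (1 - Real.exp (-v ^ 2 / 2 - u * v) / (1 + v / u) ^ 2)|
        ≤ C * min (v / u ^ 3) (1 / u ^ 4) * gaussPDF u := by
  refine ⟨3, fun u v hu hv => ?_⟩
  have hu0 : (0:ℝ) < u := lt_of_lt_of_le one_pos hu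
  have hle : u ≤ u + v := by linarith
  have hcont2 : ContinuousOn (fun t => gaussPDF t / t + 2 * gaussPDF t / t ^ 3)
      (Set.uIcc u (u+v)) := by
    rw [uIcc_of_le hle]
    apply ContinuousOn.add
    · exact (gaussPDF_cont.continuousOn).div continuousOn_id
        (fun t htm => by nlinarith [htm.1])
    · exact (continuousOn_const.mul gaussPDF_cont.continuousOn).div
        (continuousOn_pow 3)
        (fun t htm => by
          have : 0 < t := by linarith [htm.1]
          positivity)
  have hInt2 : IntervalIntegrable (fun t => gaussPDF t / t + 2 * gaussPDF t / t ^ 3)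
      volume u (u+v) := hcont2.intervalIntegrable
  have hInt1 : IntervalIntegrable gaussTail volume u (u+v) :=
    gaussTail_cont.intervalIntegrable _ _
  have hE : gaussF u - gaussF (u + v)
      - gaussPDF u / u ^ 2 * (1 - Real.exp (-v ^ 2 / 2 - u * v) / (1 + v / u) ^ 2)
      = ∫ t in u..(u+v), (gaussTail t - (gaussPDF t / t + 2 * gaussPDF t / t ^ 3)) := by
    rw [F_diff, main_term_eq hu hv, ← intervalIntegral.integral_sub hInt1 hInt2]
  rw [hE]
  have hbound : ∀ t ∈ Set.Icc u (u+v),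
      |gaussTail t - (gaussPDF t / t + 2 * gaussPDF t / t ^ 3)|
        ≤ 3 / u ^ 3 * gaussPDF t := by
    intro t ht
    have ht0 : (0:ℝ) < t := lt_of_lt_of_le hu0 ht.1
    have hml := mills_lower ht0
    have hmu := mills_upper ht0
    have e1 : 2 * gaussPDF t / t ^ 3 = 2 * (gaussPDF t / t ^ 3) := by ring
    have e2 : 3 / u ^ 3 * gaussPDF t = 3 * (gaussPDF t / u ^ 3) := by ring
    have e3 : gaussPDF t / t ^ 3 ≤ gaussPDF t / u ^ 3 :=
      div_le_div_of_nonneg_left (gaussPDF_pos t).le (pow_pos hu0 3)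
        (pow_le_pow_left₀ hu0.le ht.1 3)
    have e4 : 0 ≤ gaussPDF t / t ^ 3 := div_nonneg (gaussPDF_pos t).le (pow_nonneg ht0.le 3)
    rw [abs_le]
    constructor <;> [skip; skip] <;> rw [e1, e2] <;> linarith
  set J := ∫ t in u..(u+v), gaussPDF t with hJdef
  have hJ0 : 0 ≤ J := intervalIntegral.integral_nonneg hle (fun t _ => (gaussPDF_pos t).le)
  have hJ1 : J ≤ gaussPDF u / u := by
    have := tail_diff hle
    have h2 := tail_nonneg (u + v)
    have h3 := mills_upper hu0
    rw [hJdef]; linarith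
  have hJ2 : J ≤ v * gaussPDF u := by
    have hmono := intervalIntegral.integral_mono_on (μ := volume) hle
      (gaussPDF_cont.intervalIntegrable u (u+v))
      (intervalIntegrable_const (c := gaussPDF u))
      (fun t ht => gaussPDF_anti hu0.le ht.1)
    rw [hJdef]
    simpa using hmono
  have hnorm : |∫ t in u..(u+v), (gaussTail t - (gaussPDF t / t + 2 * gaussPDF t / t ^ 3))|
      ≤ 3 / u ^ 3 * J := by
    have hgint : IntervalIntegrable (fun t => 3 / u ^ 3 * gaussPDF t) volume u (u+v) :=
      ((continuous_const.mul gaussPDF_cont).intervalIntegrable u (u+v))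
    have h := intervalIntegral.norm_integral_le_of_norm_le (μ := volume) (a := u) (b := u+v)
      (f := fun t => gaussTail t - (gaussPDF t / t + 2 * gaussPDF t / t ^ 3))
      (g := fun t => 3 / u ^ 3 * gaussPDF t) hle ?_ hgint
    · have hgval : (∫ t in u..(u+v), 3 / u ^ 3 * gaussPDF t) = 3 / u ^ 3 * J := by
        rw [hJdef, ← intervalIntegral.integral_const_mul]
      rw [hgval] at h
      have : |3 / u ^ 3 * J| = 3 / u ^ 3 * J := abs_of_nonneg (by positivity)
      simpa [Real.norm_eq_abs] using h
    · filter_upwards with t ht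
      simpa [Real.norm_eq_abs] using hbound t ⟨ht.1.le, ht.2⟩
  refine hnorm.trans ?_
  rcases le_total (v / u ^ 3) (1 / u ^ 4) with h | h
  · rw [min_eq_left h]
    have h1 : 3 / u ^ 3 * J ≤ 3 / u ^ 3 * (v * gaussPDF u) :=
      mul_le_mul_of_nonneg_left hJ2 (by positivity)
    have h2 : 3 / u ^ 3 * (v * gaussPDF u) = 3 * (v / u ^ 3) * gaussPDF u := by ring
    linarith
  · rw [min_eq_right h]
    have h1 : 3 / u ^ 3 * J ≤ 3 / u ^ 3 * (gaussPDF u / u) :=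
      mul_le_mul_of_nonneg_left hJ1 (by positivity)
    have h2 : 3 / u ^ 3 * (gaussPDF u / u) = 3 * (1 / u ^ 4) * gaussPDF u := by
      rw [div_mul_div_comm, ← pow_succ, mul_one_div, div_mul_eq_mul_div]
    linarith
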